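/- Let ε ∈ (0,1), δ ∈ (0,1), Δf > 0, and σ = c·Δf/ε with c ≥ 3/2 and c² > 2 ln(1.25/δ). Setting t = σ²ε/Δf − Δf/2, the Gaussian tail satisfies P(N(0,σ²) > t) ≤ (σ/(√(2π) t)) exp(−t²/(2σ²)) < δ/2. -/

import Mathlib

open Real MeasureTheory
open Filter Set

/-- With `σ = cΔf/ε`, `c ≥ 3/2`, `c² > 2 ln(1.25/δ)` and `t = σ²ε/Δf − Δf/2`, the Gaussian
tail satisfies `P(N(0,σ²) > t) ≤ (σ/(√(2π) t)) exp(−t²/(2σ²)) < δ/2`. -/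
theorem gaussian_tail_lt_half_delta (ε δ Δf c : ℝ) (hε : 0 < ε) (hε1 : ε < 1)
    (hδ : 0 < δ) (hδ1 : δ < 1) (hΔ : 0 < Δf) (hc : 3 / 2 ≤ c)
    (hc2 : c ^ 2 > 2 * Real.log (1.25 / δ)) :
    let σ := c * Δf / ε
    let t := σ ^ 2 * ε / Δf - Δf / 2
    (∫ x in Set.Ioi t, (1 / (Real.sqrt (2 * π) * σ)) * Real.exp (-x ^ 2 / (2 * σ ^ 2)))
        ≤ (σ / (Real.sqrt (2 * π) * t)) * Real.exp (-t ^ 2 / (2 * σ ^ 2)) ∧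
      (σ / (Real.sqrt (2 * π) * t)) * Real.exp (-t ^ 2 / (2 * σ ^ 2)) < δ / 2 := by
  intro σ t
  have hc0 : (0:ℝ) < c := by linarith
  have hσ : 0 < σ := by positivity
  have htσ : t = σ * (c - ε / (2 * c)) := by
    show σ ^ 2 * ε / Δf - Δf / 2 = _
    show (c * Δf / ε) ^ 2 * ε / Δf - Δf / 2 = (c * Δf / ε) * (c - ε / (2 * c))
    field_simp
  have hts : σ * (7/6) ≤ t := by
    rw [htσ]
    have h1 : ε / (2 * c) ≤ 1/3 := by
      rw [div_le_iff₀ (by linarith)]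
      linarith
    have : (7:ℝ)/6 ≤ c - ε / (2 * c) := by linarith
    nlinarith
  have ht : 0 < t := lt_of_lt_of_le (by positivity) hts
  have hsqrt2pi : (2.5:ℝ) ≤ Real.sqrt (2 * π) := by
    rw [Real.le_sqrt (by norm_num) (by positivity)]
    nlinarith [Real.pi_gt_d6]
  have hsπ : (0:ℝ) < Real.sqrt (2 * π) := by linarith
  -- exponent bound
  have ht2 : t ^ 2 - σ ^ 2 * (c ^ 2 - ε) = σ ^ 2 * ε ^ 2 / (4 * c ^ 2) := by
    rw [htσ]; field_simp; ring
  clear_value σ t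
  have hexpb : -t ^ 2 / (2 * σ ^ 2) ≤ (ε - c ^ 2) / 2 := by
    have hX : 0 ≤ σ ^ 2 * ε ^ 2 / (4 * c ^ 2) := by positivity
    have h5 : σ ^ 2 * (c ^ 2 - ε) ≤ t ^ 2 := by linarith
    rw [div_le_div_iff₀ (by positivity) (by norm_num)]
    nlinarith [h5]
  constructor
  · -- tail bound
    set b : ℝ := 2 * σ ^ 2 with hb
    have hbpos : (0:ℝ) < 1 / b := by positivity
    have hfun : ∀ x : ℝ, Real.exp (-x ^ 2 / b) = Real.exp (-(1/b) * x ^ 2) := by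
      intro x; congr 1; field_simp
    have hIntExp : IntegrableOn (fun x : ℝ => Real.exp (-x ^ 2 / b)) (Ioi t) := by
      have := (integrable_exp_neg_mul_sq hbpos).integrableOn (s := Ioi t)
      exact this.congr_fun (fun x _ => (hfun x).symm) measurableSet_Ioi
    have hderiv : ∀ x ∈ Ici t, HasDerivAt (fun x : ℝ => -σ ^ 2 * Real.exp (-x ^ 2 / b))
        (x * Real.exp (-x ^ 2 / b)) x := by
      intro x _
      have h1 : HasDerivAt (fun x : ℝ => -x ^ 2 / b) (-(2 * x) / b) x := by
        have := ((hasDerivAt_pow 2 x).neg).div_const b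
        simpa using this
      have h2 := (h1.exp).const_mul (-σ ^ 2)
      refine h2.congr_deriv ?_
      rw [hb]
      field_simp
    have hnonneg : ∀ x ∈ Ioi t, 0 ≤ x * Real.exp (-x ^ 2 / b) := by
      intro x hx
      have : 0 < x := lt_trans ht hx
      positivity
    have htend : Tendsto (fun x : ℝ => -σ ^ 2 * Real.exp (-x ^ 2 / b)) atTop (nhds (-σ ^ 2 * 0)) := by
      refine Tendsto.const_mul _ ?_
      have h4 : Tendsto (fun x : ℝ => x ^ 2 / b) atTop atTop := by
        apply Tendsto.atTop_div_const (by positivity)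
        exact tendsto_pow_atTop (by norm_num)
      have h5 := Real.tendsto_exp_neg_atTop_nhds_zero.comp h4
      refine h5.congr fun x => ?_
      simp [neg_div]
    rw [mul_zero] at htend
    have hIntX : IntegrableOn (fun x : ℝ => x * Real.exp (-x ^ 2 / b)) (Ioi t) :=
      integrableOn_Ioi_deriv_of_nonneg' hderiv hnonneg htend
    have hval : ∫ x in Ioi t, x * Real.exp (-x ^ 2 / b)
        = σ ^ 2 * Real.exp (-t ^ 2 / b) := by
      rw [integral_Ioi_of_hasDerivAt_of_nonneg' hderiv hnonneg htend]
      ring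
    have hmono : ∫ x in Ioi t, (1 / (Real.sqrt (2 * π) * σ)) * Real.exp (-x ^ 2 / b)
        ≤ (1 / (Real.sqrt (2 * π) * σ)) * ((1/t) * ∫ x in Ioi t, x * Real.exp (-x ^ 2 / b)) := by
      rw [MeasureTheory.integral_const_mul]
      apply mul_le_mul_of_nonneg_left _ (by positivity)
      rw [← MeasureTheory.integral_const_mul]
      apply setIntegral_mono_on hIntExp (hIntX.const_mul _) measurableSet_Ioi
      intro x hx
      have hx' : t < x := hx
      have h1 : 1 ≤ x / t := (one_le_div ht).mpr hx'.le
      have := mul_le_mul_of_nonneg_right h1 (Real.exp_pos (-x ^ 2 / b)).le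
      rw [one_mul] at this
      calc Real.exp (-x ^ 2 / b) ≤ x / t * Real.exp (-x ^ 2 / b) := this
        _ = 1 / t * (x * Real.exp (-x ^ 2 / b)) := by ring
    refine hmono.trans_eq ?_
    rw [hval]
    field_simp
  · -- numeric bound
    have hA : σ / (Real.sqrt (2 * π) * t) ≤ 6 / 17.5 := by
      rw [div_le_div_iff₀ (by positivity) (by norm_num)]
      nlinarith [mul_le_mul hsqrt2pi hts (by positivity) hsπ.le]
    have hexpc : Real.exp (-c ^ 2 / 2) < δ / 1.25 := by
      have hl : Real.log (1.25 / δ) < c ^ 2 / 2 := by linarith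
      have h1 := Real.exp_lt_exp.mpr (neg_lt_neg hl)
      have h2 : Real.exp (-(Real.log (1.25 / δ))) = δ / 1.25 := by
        rw [Real.exp_neg, Real.exp_log (by positivity), inv_div]
      calc Real.exp (-c ^ 2 / 2) = Real.exp (-(c ^ 2 / 2)) := by ring_nf
        _ < Real.exp (-(Real.log (1.25 / δ))) := h1
        _ = δ / 1.25 := h2
    have hexp165 : Real.exp (1/2 : ℝ) ≤ 1.65 := by
      have h2 : Real.exp (1/2 : ℝ) ^ 2 = Real.exp 1 := by
        rw [← Real.exp_nat_mul]; norm_num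
      have : Real.exp (1/2 : ℝ) ^ 2 ≤ (1.65:ℝ) ^ 2 := by
        rw [h2]; nlinarith [Real.exp_one_lt_d9]
      exact le_of_pow_le_pow_left₀ two_ne_zero (by norm_num) this
    have hB : Real.exp (-t ^ 2 / (2 * σ ^ 2)) < 1.65 * (δ / 1.25) := by
      calc Real.exp (-t ^ 2 / (2 * σ ^ 2)) ≤ Real.exp ((ε - c ^ 2) / 2) :=
            Real.exp_le_exp.mpr hexpb
        _ = Real.exp (ε / 2) * Real.exp (-c ^ 2 / 2) := by
            rw [← Real.exp_add]; ring_nf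
        _ ≤ Real.exp (1/2 : ℝ) * Real.exp (-c ^ 2 / 2) := by
            apply mul_le_mul_of_nonneg_right _ (Real.exp_pos _).le
            exact Real.exp_le_exp.mpr (by linarith)
        _ ≤ 1.65 * Real.exp (-c ^ 2 / 2) :=
            mul_le_mul_of_nonneg_right hexp165 (Real.exp_pos _).le
        _ < 1.65 * (δ / 1.25) := by
            exact mul_lt_mul_of_pos_left hexpc (by norm_num)
    calc σ / (Real.sqrt (2 * π) * t) * Real.exp (-t ^ 2 / (2 * σ ^ 2))
        ≤ 6 / 17.5 * Real.exp (-t ^ 2 / (2 * σ ^ 2)) :=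
          mul_le_mul_of_nonneg_right hA (Real.exp_pos _).le
      _ < 6 / 17.5 * (1.65 * (δ / 1.25)) := mul_lt_mul_of_pos_left hB (by norm_num)
      _ ≤ δ / 2 := by ring_nf; norm_num; linarith
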